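/- Define H : ℕ → ℤ by H(0)=1 and H(n) = det((c_{i+j})_{0≤i,j≤n−1}) for n ≥ 1, and H' : ℕ → ℤ by H'(0)=1 and H'(n) = det((d_{i+j})_{0≤i,j≤n−1}) for n ≥ 1. Then the 2-kernels { (H(2^d·n+j))_{n≥0} : d ∈ ℕ, 0 ≤ j < 2^d } and { (H'(2^d·n+j))_{n≥0} : d ∈ ℕ, 0 ≤ j < 2^d } are finite sets; in particular, the sequences of Hankel determinants (H(n)) and (H'(n)) are 2-automatic. -/

import Mathlib

open Polynomial

/-- The Thue–Morse ±1 sequence: t 0 = 1, t (2n) = t n, t (2n+1) = -t n. -/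
def tmSeq : ℕ → ℤ
  | 0 => 1
  | n + 1 => if (n + 1) % 2 = 0 then tmSeq ((n + 1) / 2) else -tmSeq ((n + 1) / 2)
decreasing_by all_goals exact Nat.div_lt_self (Nat.succ_pos n) one_lt_two

/-- Numerators of the convergents of the Thue–Morse continued fraction. -/
noncomputable def Ptm : ℕ → ℤ[X]
  | 0 => 1
  | 1 => 1
  | n + 2 => Ptm (n + 1) + C (tmSeq (n + 2)) * X * Ptm n

/-- Denominators of the convergents of the Thue–Morse continued fraction. -/
noncomputable def Qtm : ℕ → ℤ[X]
  | 0 => 1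
  | 1 => 1 - X
  | n + 2 => Qtm (n + 1) + C (tmSeq (n + 2)) * X * Qtm n

open Polynomial

/-- The period-doubling ±1 sequence: s (2n) = 1, s (2n+1) = -s n. -/
def pdSeq : ℕ → ℤ
  | 0 => 1
  | n + 1 => if (n + 1) % 2 = 0 then 1 else -pdSeq ((n + 1) / 2)
decreasing_by exact Nat.div_lt_self (Nat.succ_pos n) one_lt_two

/-- Numerators of the convergents of the period-doubling continued fraction. -/
noncomputable def Ppd : ℕ → ℤ[X]
  | 0 => 1
  | 1 => 1
  | n + 2 => Ppd (n + 1) + C (pdSeq (n + 2)) * X * Ppd n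

/-- Denominators of the convergents of the period-doubling continued fraction. -/
noncomputable def Qpd : ℕ → ℤ[X]
  | 0 => 1
  | 1 => 1 - X
  | n + 2 => Qpd (n + 1) + C (pdSeq (n + 2)) * X * Qpd n


section Generic
open Matrix

variable (a : ℕ → ℤ) (P Q : ℕ → ℤ[X]) (Cx : PowerSeries ℤ)

lemma aux_coeff_zero (R : ℕ → ℤ[X])
    (hR : ∀ n, R (n+2) = R (n+1) + C (a (n+2)) * X * R n)
    (c0 : ℕ) (h0 : ∀ i, c0 < 2*i → (R 0).coeff i = 0)
    (h1 : ∀ i, c0 + 1 < 2*i → (R 1).coeff i = 0) :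
    ∀ n i, c0 + n < 2*i → (R n).coeff i = 0 := by
  intro n
  induction n using Nat.strong_induction_on with
  | _ n ih =>
    match n with
    | 0 => exact h0
    | 1 => exact h1
    | k + 2 =>
      intro i hi
      rw [hR k, coeff_add]
      have e1 : (R (k+1)).coeff i = 0 := ih (k+1) (by omega) i (by omega)
      have e2 : (C (a (k+2)) * X * R k).coeff i = 0 := by
        rw [mul_assoc, coeff_C_mul]
        obtain ⟨j, rfl⟩ : ∃ j, i = j + 1 := ⟨i - 1, by omega⟩
        rw [coeff_X_mul, ih k (by omega) j (by omega)]
        ring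
      rw [e1, e2]; ring

lemma aux_coeff_zero_Q
    (hQ0 : Q 0 = 1) (hQ1 : Q 1 = 1 - X)
    (hQr : ∀ n, Q (n+2) = Q (n+1) + C (a (n+2)) * X * Q n) :
    ∀ n i, 1 + n < 2*i → (Q n).coeff i = 0 := by
  apply aux_coeff_zero a Q hQr 1
  · intro i hi
    rw [hQ0, Polynomial.coeff_one]
    have : i ≠ 0 := by omega
    simp [this]
  · intro i hi
    rw [hQ1, coeff_sub, Polynomial.coeff_one, Polynomial.coeff_X]
    have h1 : i ≠ 0 := by omega
    have h2 : 1 ≠ i := by omega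
    simp [h1, h2]

lemma aux_coeff_zero_P
    (hP0 : P 0 = 1) (hP1 : P 1 = 1)
    (hPr : ∀ n, P (n+2) = P (n+1) + C (a (n+2)) * X * P n) :
    ∀ n i, n < 2*i → (P n).coeff i = 0 := by
  intro n i hi
  refine aux_coeff_zero a P hPr 0 ?_ ?_ n i (by omega)
  · intro i hi
    rw [hP0, Polynomial.coeff_one]
    have : i ≠ 0 := by omega
    simp [this]
  · intro i hi
    rw [hP1, Polynomial.coeff_one]
    have : i ≠ 0 := by omega
    simp [this]

lemma aux_coeff_zero_const (R : ℕ → ℤ[X])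
    (hR : ∀ n, R (n+2) = R (n+1) + C (a (n+2)) * X * R n)
    (h0 : (R 0).coeff 0 = 1) (h1 : (R 1).coeff 0 = 1) :
    ∀ n, (R n).coeff 0 = 1 := by
  intro n
  induction n using Nat.strong_induction_on with
  | _ n ih =>
    match n with
    | 0 => exact h0
    | 1 => exact h1
    | k + 2 =>
      rw [hR k, coeff_add, ih (k+1) (by omega)]
      simp [Polynomial.mul_coeff_zero]

lemma Q_const_coeff
    (hQ0 : Q 0 = 1) (hQ1 : Q 1 = 1 - X)
    (hQr : ∀ n, Q (n+2) = Q (n+1) + C (a (n+2)) * X * Q n) :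
    ∀ n, (Q n).coeff 0 = 1 := by
  apply aux_coeff_zero_const a Q hQr
  · rw [hQ0]; simp
  · rw [hQ1]; simp

lemma cross_identity
    (hP0 : P 0 = 1) (hP1 : P 1 = 1) (hQ0 : Q 0 = 1) (hQ1 : Q 1 = 1 - X)
    (hPr : ∀ n, P (n+2) = P (n+1) + C (a (n+2)) * X * P n)
    (hQr : ∀ n, Q (n+2) = Q (n+1) + C (a (n+2)) * X * Q n) :
    ∀ n, P (n+1) * Q n - P n * Q (n+1)
      = C ((-1)^n * ∏ j ∈ Finset.Icc 2 (n+1), a j) * X^(n+1) := by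
  intro n
  induction n with
  | zero =>
    rw [hP0, hP1, hQ0, hQ1]
    rw [show Finset.Icc 2 1 = (∅ : Finset ℕ) from Finset.Icc_eq_empty (by omega)]
    simp
  | succ n ih =>
    have step : P (n+2) * Q (n+1) - P (n+1) * Q (n+2)
        = C (a (n+2)) * X * -(P (n+1) * Q n - P n * Q (n+1)) := by
      rw [hPr n, hQr n]; ring
    rw [step, ih, Finset.prod_Icc_succ_top (by omega : 2 ≤ n + 2)]
    simp only [_root_.map_mul, _root_.map_pow, _root_.map_neg, _root_.map_one]
    ring
lemma coeff_E_zero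
    (hC : ∀ n, (PowerSeries.X : PowerSeries ℤ)^(n+1) ∣ Cx * (Q n : PowerSeries ℤ) - (P n : PowerSeries ℤ))
    (n k : ℕ) (hk : k ≤ n) :
    PowerSeries.coeff k (Cx * (Q n : PowerSeries ℤ) - (P n : PowerSeries ℤ)) = 0 :=
  (PowerSeries.X_pow_dvd_iff.mp (hC n)) k (by omega)

lemma coeff_E_top
    (hP0 : P 0 = 1) (hP1 : P 1 = 1) (hQ0 : Q 0 = 1) (hQ1 : Q 1 = 1 - X)
    (hPr : ∀ n, P (n+2) = P (n+1) + C (a (n+2)) * X * P n)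
    (hQr : ∀ n, Q (n+2) = Q (n+1) + C (a (n+2)) * X * Q n)
    (hC : ∀ n, (PowerSeries.X : PowerSeries ℤ)^(n+1) ∣ Cx * (Q n : PowerSeries ℤ) - (P n : PowerSeries ℤ))
    (n : ℕ) :
    PowerSeries.coeff (n+1) (Cx * (Q n : PowerSeries ℤ) - (P n : PowerSeries ℤ))
      = (-1)^n * ∏ j ∈ Finset.Icc 2 (n+1), a j := by
  have key : (Cx * (Q (n+1) : PowerSeries ℤ) - (P (n+1) : PowerSeries ℤ)) * (Q n : PowerSeries ℤ)
      - (Cx * (Q n : PowerSeries ℤ) - (P n : PowerSeries ℤ)) * (Q (n+1) : PowerSeries ℤ)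
      = -((C ((-1)^n * ∏ j ∈ Finset.Icc 2 (n+1), a j) * X^(n+1) : ℤ[X]) : PowerSeries ℤ) := by
    rw [← cross_identity a P Q hP0 hP1 hQ0 hQ1 hPr hQr n]
    push_cast
    ring
  have h1 : PowerSeries.coeff (n+1)
      ((Cx * (Q (n+1) : PowerSeries ℤ) - (P (n+1) : PowerSeries ℤ)) * (Q n : PowerSeries ℤ)) = 0 := by
    rw [PowerSeries.coeff_mul]
    apply Finset.sum_eq_zero
    intro p hp
    have hle : p.1 ≤ n + 1 := Finset.HasAntidiagonal.antidiagonal.fst_le hp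
    rw [coeff_E_zero P Q Cx hC (n+1) p.1 hle, zero_mul]
  have h2 : PowerSeries.coeff (n+1)
      ((Cx * (Q n : PowerSeries ℤ) - (P n : PowerSeries ℤ)) * (Q (n+1) : PowerSeries ℤ))
      = PowerSeries.coeff (n+1) (Cx * (Q n : PowerSeries ℤ) - (P n : PowerSeries ℤ)) := by
    rw [PowerSeries.coeff_mul]
    rw [Finset.sum_eq_single ((n+1 : ℕ), (0 : ℕ))]
    · rw [Polynomial.coeff_coe, Q_const_coeff a Q hQ0 hQ1 hQr (n+1), mul_one]
    · intro p hp hne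
      have hsum : p.1 + p.2 = n + 1 := Finset.HasAntidiagonal.mem_antidiagonal.mp hp
      have : p.1 ≤ n := by
        rcases Nat.lt_or_ge p.1 (n+1) with h | h
        · omega
        · exfalso; apply hne
          have : p.1 = n + 1 := by omega
          have h2 : p.2 = 0 := by omega
          cases p; simp_all
      rw [coeff_E_zero P Q Cx hC n p.1 this, zero_mul]
    · intro h
      exact absurd (Finset.HasAntidiagonal.mem_antidiagonal.mpr (by simp)) h
  have h3 : PowerSeries.coeff (n+1)
      (-((C ((-1)^n * ∏ j ∈ Finset.Icc 2 (n+1), a j) * X^(n+1) : ℤ[X]) : PowerSeries ℤ))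
      = -((-1)^n * ∏ j ∈ Finset.Icc 2 (n+1), a j) := by
    rw [map_neg, Polynomial.coeff_coe, Polynomial.coeff_C_mul, Polynomial.coeff_X_pow]
    simp
  have := congrArg (PowerSeries.coeff (n+1)) key
  rw [map_sub, h1, h2, h3] at this
  linarith

lemma coeff_Cx_zero
    (hP0 : P 0 = 1) (hQ0 : Q 0 = 1)
    (hC : ∀ n, (PowerSeries.X : PowerSeries ℤ)^(n+1) ∣ Cx * (Q n : PowerSeries ℤ) - (P n : PowerSeries ℤ)) :
    PowerSeries.coeff 0 Cx = 1 := by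
  have h := coeff_E_zero P Q Cx hC 0 0 (le_refl 0)
  rw [hP0, hQ0] at h
  simp at h
  rw [PowerSeries.coeff_zero_eq_constantCoeff]
  linarith

lemma row_sum
    (hQ0 : Q 0 = 1) (hQ1 : Q 1 = 1 - X)
    (hQr : ∀ n, Q (n+2) = Q (n+1) + C (a (n+2)) * X * Q n)
    (m L : ℕ) (hLm : L < m) (r : ℕ) :
    ∑ j : Fin m, (if (j:ℕ) ≤ L then (Q (2*L-1)).coeff (L-(j:ℕ)) else 0)
        * PowerSeries.coeff (r + (j:ℕ)) Cx
      = PowerSeries.coeff (r + L) (Cx * (Q (2*L-1) : PowerSeries ℤ)) := by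
  have hq : ∀ v, L < v → (Q (2*L-1)).coeff v = 0 := by
    intro v hv
    exact aux_coeff_zero_Q a Q hQ0 hQ1 hQr (2*L-1) v (by omega)
  have hL : ∑ j : Fin m, (if (j:ℕ) ≤ L then (Q (2*L-1)).coeff (L-(j:ℕ)) else 0)
        * PowerSeries.coeff (r + (j:ℕ)) Cx
      = ∑ j ∈ Finset.range (L+1), (Q (2*L-1)).coeff (L-j) * PowerSeries.coeff (r+j) Cx := by
    rw [Fin.sum_univ_eq_sum_range
      (fun j => (if j ≤ L then (Q (2*L-1)).coeff (L-j) else 0) * PowerSeries.coeff (r + j) Cx) m]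
    rw [← Finset.sum_subset (Finset.range_subset_range.mpr (by omega : L+1 ≤ m))
      (fun x _ hx => by
        have : ¬ (x ≤ L) := by simp only [Finset.mem_range] at hx; omega
        rw [if_neg this, zero_mul])]
    apply Finset.sum_congr rfl
    intro j hj
    have : j ≤ L := by simp only [Finset.mem_range] at hj; omega
    rw [if_pos this]
  have hR : PowerSeries.coeff (r + L) (Cx * (Q (2*L-1) : PowerSeries ℤ))
      = ∑ j ∈ Finset.range (L+1), (Q (2*L-1)).coeff (L-j) * PowerSeries.coeff (r+j) Cx := by
    rw [PowerSeries.coeff_mul, Finset.Nat.sum_antidiagonal_eq_sum_range_succ_mk]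
    rw [show (r+L).succ = r + L + 1 from rfl]
    rw [Finset.range_eq_Ico, ← Finset.sum_Ico_consecutive _ (Nat.zero_le r) (by omega : r ≤ r+L+1)]
    have hzero : ∑ k ∈ Finset.Ico 0 r,
        PowerSeries.coeff k Cx * PowerSeries.coeff (r+L-k) ((Q (2*L-1) : PowerSeries ℤ)) = 0 := by
      apply Finset.sum_eq_zero
      intro k hk
      have hkr : k < r := (Finset.mem_Ico.mp hk).2
      have : L < r + L - k := by omega
      rw [Polynomial.coeff_coe, hq _ this, mul_zero]
    rw [hzero, zero_add, Finset.sum_Ico_eq_sum_range]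
    rw [show r + L + 1 - r = L + 1 from by omega]
    apply Finset.sum_congr rfl
    intro j hj
    have hjL : j ≤ L := by simp only [Finset.mem_range] at hj; omega
    dsimp only
    rw [show r + L - (r + j) = L - j from by omega, Polynomial.coeff_coe, mul_comm]
  rw [hL, hR]

lemma inner_split (n N : ℕ) :
    PowerSeries.coeff N (Cx * (Q n : PowerSeries ℤ))
      = PowerSeries.coeff N (Cx * (Q n : PowerSeries ℤ) - (P n : PowerSeries ℤ)) + (P n).coeff N := by
  rw [map_sub, Polynomial.coeff_coe]; ring

lemma inner_lt
    (hP0 : P 0 = 1) (hP1 : P 1 = 1)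
    (hPr : ∀ n, P (n+2) = P (n+1) + C (a (n+2)) * X * P n)
    (hC : ∀ n, (PowerSeries.X : PowerSeries ℤ)^(n+1) ∣ Cx * (Q n : PowerSeries ℤ) - (P n : PowerSeries ℤ))
    (k r : ℕ) (hk : 1 ≤ k) (hr : r < k) :
    PowerSeries.coeff (r + k) (Cx * (Q (2*k-1) : PowerSeries ℤ)) = 0 := by
  rw [inner_split P Q Cx]
  rw [coeff_E_zero P Q Cx hC (2*k-1) (r+k) (by omega)]
  rw [aux_coeff_zero_P a P hP0 hP1 hPr (2*k-1) (r+k) (by omega)]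
  ring

lemma inner_diag
    (hP0 : P 0 = 1) (hP1 : P 1 = 1) (hQ0 : Q 0 = 1) (hQ1 : Q 1 = 1 - X)
    (hPr : ∀ n, P (n+2) = P (n+1) + C (a (n+2)) * X * P n)
    (hQr : ∀ n, Q (n+2) = Q (n+1) + C (a (n+2)) * X * Q n)
    (hC : ∀ n, (PowerSeries.X : PowerSeries ℤ)^(n+1) ∣ Cx * (Q n : PowerSeries ℤ) - (P n : PowerSeries ℤ))
    (k : ℕ) (hk : 1 ≤ k) :
    PowerSeries.coeff (k + k) (Cx * (Q (2*k-1) : PowerSeries ℤ))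
      = -∏ j ∈ Finset.Icc 2 (2*k), a j := by
  rw [inner_split P Q Cx]
  rw [aux_coeff_zero_P a P hP0 hP1 hPr (2*k-1) (k+k) (by omega), add_zero]
  rw [show k + k = (2*k-1)+1 from by omega]
  rw [coeff_E_top a P Q Cx hP0 hP1 hQ0 hQ1 hPr hQr hC (2*k-1)]
  rw [show (2*k-1)+1 = 2*k from by omega]
  rw [show ((-1 : ℤ))^(2*k-1) = -1 from Odd.neg_one_pow ⟨k-1, by omega⟩]
  ring
theorem hankel_det_formula
    (hP0 : P 0 = 1) (hP1 : P 1 = 1) (hQ0 : Q 0 = 1) (hQ1 : Q 1 = 1 - X)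
    (hPr : ∀ n, P (n+2) = P (n+1) + C (a (n+2)) * X * P n)
    (hQr : ∀ n, Q (n+2) = Q (n+1) + C (a (n+2)) * X * Q n)
    (hC : ∀ n, (PowerSeries.X : PowerSeries ℤ)^(n+1) ∣ Cx * (Q n : PowerSeries ℤ) - (P n : PowerSeries ℤ))
    (m : ℕ) :
    (Matrix.of fun i j : Fin m => PowerSeries.coeff ((i:ℕ) + (j:ℕ)) Cx).det
      = ∏ k ∈ Finset.range m, (if k = 0 then 1 else -∏ j ∈ Finset.Icc 2 (2*k), a j) := by
  set A : Matrix (Fin m) (Fin m) ℤ :=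
    Matrix.of (fun i j : Fin m => PowerSeries.coeff ((i:ℕ) + (j:ℕ)) Cx) with hA
  set U : Matrix (Fin m) (Fin m) ℤ :=
    Matrix.of (fun k i : Fin m =>
      if (i:ℕ) ≤ (k:ℕ) then (Q (2*(k:ℕ)-1)).coeff ((k:ℕ)-(i:ℕ)) else 0) with hU
  have hUkk : ∀ k : Fin m, U k k = 1 := by
    intro k
    simp [hU, Q_const_coeff a Q hQ0 hQ1 hQr]
  have hrow : ∀ (k : Fin m) (r : ℕ),
      ∑ i : Fin m, U k i * PowerSeries.coeff (r + (i:ℕ)) Cx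
        = PowerSeries.coeff (r + (k:ℕ)) (Cx * (Q (2*(k:ℕ)-1) : PowerSeries ℤ)) := by
    intro k r
    simpa [hU] using row_sum a Q Cx hQ0 hQ1 hQr m (k:ℕ) k.isLt r
  have hMapply : ∀ k l : Fin m, (U * A * Uᵀ) k l
      = ∑ j : Fin m, PowerSeries.coeff (((j:ℕ)) + (k:ℕ)) (Cx * (Q (2*(k:ℕ)-1) : PowerSeries ℤ)) * U l j := by
    intro k l
    rw [Matrix.mul_apply]
    apply Finset.sum_congr rfl
    intro j _
    rw [Matrix.transpose_apply, Matrix.mul_apply]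
    congr 1
    rw [← hrow k (j:ℕ)]
    apply Finset.sum_congr rfl
    intro i _
    congr 1
    simp [hA, Nat.add_comm]
  have hdiagval : ∀ k : Fin m, (U * A * Uᵀ) k k
      = (if (k:ℕ) = 0 then 1 else -∏ j ∈ Finset.Icc 2 (2*(k:ℕ)), a j) := by
    intro k
    rw [hMapply k k]
    rw [Finset.sum_eq_single k]
    · rw [hUkk, mul_one]
      by_cases hk0 : (k:ℕ) = 0
      · rw [if_pos hk0, hk0]
        rw [show 2*0-1 = 0 from rfl, hQ0, Polynomial.coe_one, mul_one]
        simpa using coeff_Cx_zero P Q Cx hP0 hQ0 hC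
      · rw [if_neg hk0]
        exact inner_diag a P Q Cx hP0 hP1 hQ0 hQ1 hPr hQr hC (k:ℕ) (by omega)
    · intro j _ hj
      have hjk : (j:ℕ) ≠ (k:ℕ) := fun e => hj (Fin.ext e)
      rcases Nat.lt_or_ge (j:ℕ) (k:ℕ) with h | h
      · rw [inner_lt a P Q Cx hP0 hP1 hPr hC (k:ℕ) (j:ℕ) (by omega) h, zero_mul]
      · have hnle : ¬((j:ℕ) ≤ (k:ℕ)) := by omega
        have : U k j = 0 := by rw [hU, Matrix.of_apply, if_neg hnle]
        rw [this, mul_zero]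
    · intro h
      exact absurd (Finset.mem_univ k) h
  have hoffdiag : ∀ k l : Fin m, (l:ℕ) < (k:ℕ) → (U * A * Uᵀ) k l = 0 := by
    intro k l hlk
    rw [hMapply k l]
    apply Finset.sum_eq_zero
    intro j _
    by_cases hj : (j:ℕ) ≤ (l:ℕ)
    · rw [inner_lt a P Q Cx hP0 hP1 hPr hC (k:ℕ) (j:ℕ) (by omega) (by omega), zero_mul]
    · have : U l j = 0 := by rw [hU, Matrix.of_apply, if_neg hj]
      rw [this, mul_zero]
  have hAsym : Aᵀ = A := by
    ext i j
    simp [hA, Matrix.transpose_apply, Nat.add_comm]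
  have hMsym : (U * A * Uᵀ)ᵀ = U * A * Uᵀ := by
    rw [Matrix.transpose_mul, Matrix.transpose_mul, Matrix.transpose_transpose, hAsym,
      Matrix.mul_assoc, ← Matrix.mul_assoc]
  have hM : U * A * Uᵀ = Matrix.diagonal
      (fun k : Fin m => if (k:ℕ) = 0 then 1 else -∏ j ∈ Finset.Icc 2 (2*(k:ℕ)), a j) := by
    ext k l
    rcases lt_trichotomy ((k:ℕ)) ((l:ℕ)) with h | h | h
    · have h0 : (U * A * Uᵀ) k l = ((U * A * Uᵀ)ᵀ) l k := rfl
      rw [h0, hMsym, hoffdiag l k h,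
        Matrix.diagonal_apply_ne _ (Fin.ne_of_val_ne (by omega))]
    · have hkl : k = l := Fin.ext h
      subst hkl
      rw [Matrix.diagonal_apply_eq, hdiagval]
    · rw [hoffdiag k l h, Matrix.diagonal_apply_ne _ (Fin.ne_of_val_ne (by omega))]
  have hUtri : U.BlockTriangular OrderDual.toDual := by
    intro i j hij
    have hij' : (i:ℕ) < (j:ℕ) := by
      have := OrderDual.toDual_lt_toDual.mp hij
      exact this
    have hnle : ¬((j:ℕ) ≤ (i:ℕ)) := by omega
    rw [hU, Matrix.of_apply, if_neg hnle]
  have hdetU : U.det = 1 := by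
    rw [Matrix.det_of_lowerTriangular U hUtri]
    apply Finset.prod_eq_one
    intro k _
    exact hUkk k
  have hdetM := congrArg Matrix.det hM
  rw [Matrix.det_mul, Matrix.det_mul, Matrix.det_transpose, hdetU, one_mul, mul_one,
    Matrix.det_diagonal] at hdetM
  rw [hdetM]
  exact Fin.prod_univ_eq_prod_range
    (fun k => if k = 0 then 1 else -∏ j ∈ Finset.Icc 2 (2*k), a j) m
end Generic


lemma tm_even (n : ℕ) : tmSeq (2 * n) = tmSeq n := by
  cases n with
  | zero => rfl
  | succ k =>
    have h : 2 * (k + 1) = (2 * k + 1) + 1 := by ring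
    rw [h, tmSeq]
    have h2 : (2 * k + 1 + 1) % 2 = 0 := by omega
    have h3 : (2 * k + 1 + 1) / 2 = k + 1 := by omega
    simp [h2, h3]

lemma tm_odd (n : ℕ) : tmSeq (2 * n + 1) = -tmSeq n := by
  rw [show 2 * n + 1 = (2 * n) + 1 from rfl, tmSeq]
  have h2 : (2 * n + 1) % 2 = 1 := by omega
  have h3 : (2 * n + 1) / 2 = n := by omega
  simp [h2, h3]

lemma tm_zero : tmSeq 0 = 1 := by rw [tmSeq]
lemma tm_one : tmSeq 1 = -1 := by
  have := tm_odd 0; rw [tm_zero] at this; simpa using this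

lemma tm_pm (n : ℕ) : tmSeq n = 1 ∨ tmSeq n = -1 := by
  induction n using Nat.strong_induction_on with
  | _ n ih =>
    match n with
    | 0 => exact Or.inl tm_zero
    | k + 1 =>
      rw [tmSeq]
      rcases ih ((k+1)/2) (Nat.div_lt_self (Nat.succ_pos k) one_lt_two) with h | h <;>
        rw [h] <;> split <;> simp

lemma tm_sq (n : ℕ) : tmSeq n * tmSeq n = 1 := by
  rcases tm_pm n with h | h <;> rw [h] <;> ring

lemma pd_zero : pdSeq 0 = 1 := by rw [pdSeq]

lemma pd_even (n : ℕ) : pdSeq (2 * n) = 1 := by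
  cases n with
  | zero => simpa using pd_zero
  | succ k =>
    have h : 2 * (k + 1) = (2 * k + 1) + 1 := by ring
    rw [h, pdSeq]
    have h2 : (2 * k + 1 + 1) % 2 = 0 := by omega
    simp [h2]

lemma pd_odd (n : ℕ) : pdSeq (2 * n + 1) = -pdSeq n := by
  rw [show 2 * n + 1 = (2 * n) + 1 from rfl, pdSeq]
  have h2 : (2 * n + 1) % 2 = 1 := by omega
  have h3 : (2 * n + 1) / 2 = n := by omega
  simp [h2, h3]

lemma pd_one : pdSeq 1 = -1 := by
  have := pd_odd 0; rw [pd_zero] at this; simpa using this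

lemma pd_pm (n : ℕ) : pdSeq n = 1 ∨ pdSeq n = -1 := by
  induction n using Nat.strong_induction_on with
  | _ n ih =>
    match n with
    | 0 => exact Or.inl pd_zero
    | k + 1 =>
      rw [pdSeq]
      rcases ih ((k+1)/2) (Nat.div_lt_self (Nat.succ_pos k) one_lt_two) with h | h <;>
        rw [h] <;> split <;> simp

lemma pd_sq (n : ℕ) : pdSeq n * pdSeq n = 1 := by
  rcases pd_pm n with h | h <;> rw [h] <;> ring

/-- prefix product of pdSeq -/
def Gpd (n : ℕ) : ℤ := ∏ j ∈ Finset.range n, pdSeq j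

lemma Gpd_succ (n : ℕ) : Gpd (n + 1) = Gpd n * pdSeq n := Finset.prod_range_succ _ _

lemma Gpd_even (n : ℕ) : Gpd (2 * n) = (-1) ^ n * Gpd n := by
  induction n with
  | zero => simp [Gpd]
  | succ k ih =>
    have h : 2 * (k + 1) = (2 * k) + 1 + 1 := by ring
    rw [h, Gpd_succ, Gpd_succ, ih, pd_even, pd_odd, Gpd_succ]
    ring

lemma Gpd_odd (n : ℕ) : Gpd (2 * n + 1) = (-1) ^ n * Gpd n := by
  rw [Gpd_succ, Gpd_even, pd_even, mul_one]

lemma Gpd_sq (n : ℕ) : Gpd n * Gpd n = 1 := by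
  induction n with
  | zero => simp [Gpd]
  | succ k ih => rw [Gpd_succ]; have := pd_sq k; nlinarith [pd_sq k]

/-- prefix product of tmSeq -/
def Gtm (n : ℕ) : ℤ := ∏ j ∈ Finset.range n, tmSeq j

lemma Gtm_succ (n : ℕ) : Gtm (n + 1) = Gtm n * tmSeq n := Finset.prod_range_succ _ _

lemma Gtm_closed : ∀ k, Gtm (2*k+1) = (-1)^k * tmSeq k ∧ Gtm (2*k+2) = (-1)^(k+1) := by
  intro k
  induction k with
  | zero =>
    constructor
    · simp [Gtm, Finset.prod_range_one, tm_zero]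
    · rw [show 2*0+2 = 1+1 from rfl, Gtm_succ, show Gtm 1 = 1 from by simp [Gtm, tm_zero], tm_one]
      simp
  | succ k ih =>
    have h1 : Gtm (2*(k+1)+1) = (-1)^(k+1) * tmSeq (k+1) := by
      rw [show 2*(k+1)+1 = (2*k+2)+1 from by ring, Gtm_succ, ih.2,
        show 2*k+2 = 2*(k+1) from by ring, tm_even]
    refine ⟨h1, ?_⟩
    rw [show 2*(k+1)+2 = (2*(k+1)+1)+1 from rfl, Gtm_succ, h1, tm_odd]
    linear_combination (-((-1:ℤ)^(k+1))) * tm_sq (k+1)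

lemma prefix_to_Icc (f : ℕ → ℤ) (k : ℕ) (hk : 1 ≤ k) :
    ∏ j ∈ Finset.range (2*k+1), f j = (f 0 * f 1) * ∏ j ∈ Finset.Icc 2 (2*k), f j := by
  have hIcc : Finset.Icc 2 (2*k) = Finset.Ico 2 (2*k+1) := (Finset.Ico_add_one_right_eq_Icc 2 (2*k)).symm
  rw [hIcc, Finset.range_eq_Ico,
    ← Finset.prod_Ico_consecutive f (by omega : 0 ≤ 2) (by omega : 2 ≤ 2*k+1)]
  congr 1
  rw [← Finset.range_eq_Ico]
  simp [Finset.prod_range_succ]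

lemma factor_tm (k : ℕ) :
    (if k = 0 then 1 else -(∏ j ∈ Finset.Icc 2 (2*k), tmSeq j)) = (-1:ℤ)^k * tmSeq k := by
  rcases Nat.eq_zero_or_pos k with rfl | hk
  · simp [tm_zero]
  · rw [if_neg (by omega)]
    have h := prefix_to_Icc tmSeq k hk
    have h2 : Gtm (2*k+1) = ∏ j ∈ Finset.range (2*k+1), tmSeq j := rfl
    have h3 := (Gtm_closed k).1
    rw [h2, h, tm_zero, tm_one] at h3
    linarith

lemma factor_pd (k : ℕ) :
    (if k = 0 then 1 else -(∏ j ∈ Finset.Icc 2 (2*k), pdSeq j)) = (-1:ℤ)^k * Gpd k := by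
  rcases Nat.eq_zero_or_pos k with rfl | hk
  · simp [Gpd]
  · rw [if_neg (by omega)]
    have h := prefix_to_Icc pdSeq k hk
    have h2 : Gpd (2*k+1) = ∏ j ∈ Finset.range (2*k+1), pdSeq j := rfl
    have h3 := Gpd_odd k
    rw [h2, h, pd_zero, pd_one] at h3
    linarith

lemma PhiT_closed : ∀ n, (∏ k ∈ Finset.range (2*n), ((-1:ℤ)^k * tmSeq k)) = 1 ∧
    (∏ k ∈ Finset.range (2*n+1), ((-1:ℤ)^k * tmSeq k)) = tmSeq n := by
  intro n
  induction n with
  | zero => simp [Finset.prod_range_one, tm_zero]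
  | succ n ih =>
    have he : ((-1:ℤ))^(2*n+1) = -1 := Odd.neg_one_pow ⟨n, by ring⟩
    have ho : ((-1:ℤ))^(2*n+2) = 1 := Even.neg_one_pow ⟨n+1, by ring⟩
    have h1 : (∏ k ∈ Finset.range (2*(n+1)), ((-1:ℤ)^k * tmSeq k)) = 1 := by
      rw [show 2*(n+1) = (2*n+1)+1 from by ring, Finset.prod_range_succ, ih.2, he, tm_odd]
      linear_combination tm_sq n
    refine ⟨h1, ?_⟩
    rw [show 2*(n+1)+1 = (2*(n+1))+1 from rfl, Finset.prod_range_succ, h1, one_mul, tm_even,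
      show ((-1:ℤ))^(2*(n+1)) = 1 from Even.neg_one_pow ⟨n+1, by ring⟩, one_mul]

lemma PhiP_closed : ∀ n, (∏ k ∈ Finset.range (2*n), ((-1:ℤ)^k * Gpd k)) = (-1)^n ∧
    (∏ k ∈ Finset.range (2*n+1), ((-1:ℤ)^k * Gpd k)) = Gpd n := by
  intro n
  induction n with
  | zero => simp [Finset.prod_range_one, Gpd]
  | succ n ih =>
    have he : ((-1:ℤ))^(2*n+1) = -1 := Odd.neg_one_pow ⟨n, by ring⟩
    have ho : ((-1:ℤ))^(2*n+2) = 1 := Even.neg_one_pow ⟨n+1, by ring⟩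
    have h1 : (∏ k ∈ Finset.range (2*(n+1)), ((-1:ℤ)^k * Gpd k)) = (-1)^(n+1) := by
      rw [show 2*(n+1) = (2*n+1)+1 from by ring, Finset.prod_range_succ, ih.2, he, Gpd_odd]
      linear_combination (-((-1:ℤ)^n)) * Gpd_sq n
    refine ⟨h1, ?_⟩
    rw [show 2*(n+1)+1 = (2*(n+1))+1 from rfl, Finset.prod_range_succ, h1, Gpd_even,
      show ((-1:ℤ))^(2*(n+1)) = 1 from Even.neg_one_pow ⟨n+1, by ring⟩, one_mul]
    have hpow : ((-1:ℤ))^(n+1) * (-1)^(n+1) = 1 := by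
      rw [← pow_add]; exact Even.neg_one_pow ⟨n+1, by ring⟩
    linear_combination Gpd (n+1) * hpow

lemma kernel_finite_of_closed (H : ℕ → ℤ) (F : Set (ℕ → ℤ)) (hfin : F.Finite) (hHF : H ∈ F)
    (hcl : ∀ g ∈ F, (fun n => g (2*n)) ∈ F ∧ (fun n => g (2*n+1)) ∈ F) :
    {g : ℕ → ℤ | ∃ d j : ℕ, j < 2^d ∧ g = fun n => H (2^d*n + j)}.Finite := by
  have key : ∀ d, ∀ g ∈ F, ∀ j, j < 2^d → (fun n => g (2^d*n + j)) ∈ F := by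
    intro d
    induction d with
    | zero =>
      intro g hg j hj
      interval_cases j
      simpa using hg
    | succ d ih =>
      intro g hg j hj
      have hsplit : (fun n => g (2^(d+1)*n + j)) = fun n => (fun x => g (2*x + j % 2)) (2^d * n + j / 2) := by
        funext n
        congr 1
        have h2 : 2^(d+1)*n = 2*(2^d*n) := by rw [pow_succ]; ring
        omega
      have hmem : (fun x => g (2*x + j % 2)) ∈ F := by
        rcases Nat.mod_two_eq_zero_or_one j with h | h
        · rw [h]; simpa using (hcl g hg).1
        · rw [h]; exact (hcl g hg).2
      rw [hsplit]
      exact ih _ hmem (j/2) (by rw [pow_succ] at hj; omega)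
  apply Set.Finite.subset hfin
  rintro g ⟨d, j, hj, rfl⟩
  exact key d H hHF j hj

/-- The sequences of Hankel determinants of C(x) and D(x) have finite 2-kernels;
in particular they are 2-automatic. (For n = 0 the determinant of the empty 0×0
matrix is 1, so H(0) = H'(0) = 1.) -/
theorem tm_pd_cf_hankel_two_automatic (Cx Dx : PowerSeries ℤ)
    (hC : ∀ n : ℕ, (PowerSeries.X : PowerSeries ℤ) ^ (n + 1) ∣
      Cx * (Qtm n : PowerSeries ℤ) - (Ptm n : PowerSeries ℤ))
    (hD : ∀ n : ℕ, (PowerSeries.X : PowerSeries ℤ) ^ (n + 1) ∣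
      Dx * (Qpd n : PowerSeries ℤ) - (Ppd n : PowerSeries ℤ))
    (H H' : ℕ → ℤ)
    (hH : ∀ n : ℕ, H n = (Matrix.of fun i j : Fin n =>
      PowerSeries.coeff ((i : ℕ) + (j : ℕ)) Cx).det)
    (hH' : ∀ n : ℕ, H' n = (Matrix.of fun i j : Fin n =>
      PowerSeries.coeff ((i : ℕ) + (j : ℕ)) Dx).det) :
    {g : ℕ → ℤ | ∃ d j : ℕ, j < 2 ^ d ∧ g = fun n => H (2 ^ d * n + j)}.Finite ∧
    {g : ℕ → ℤ | ∃ d j : ℕ, j < 2 ^ d ∧ g = fun n => H' (2 ^ d * n + j)}.Finite := by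
  constructor
  · -- Thue–Morse part
    have hform : ∀ m, H m = ∏ k ∈ Finset.range m, ((-1:ℤ)^k * tmSeq k) := by
      intro m
      rw [hH m, hankel_det_formula tmSeq Ptm Qtm Cx rfl rfl rfl rfl
        (fun n => rfl) (fun n => rfl) hC m]
      exact Finset.prod_congr rfl (fun k _ => factor_tm k)
    have hHe : ∀ n, H (2*n) = 1 := fun n => by rw [hform]; exact (PhiT_closed n).1
    have hHo : ∀ n, H (2*n+1) = tmSeq n := fun n => by rw [hform]; exact (PhiT_closed n).2
    refine kernel_finite_of_closed H
      {H, tmSeq, (fun n => -tmSeq n), (fun _ => (1:ℤ))} ?_ ?_ ?_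
    · exact (((Set.finite_singleton _).insert _).insert _).insert _
    · exact Set.mem_insert _ _
    · have m1 : H ∈ ({H, tmSeq, (fun n => -tmSeq n), (fun _ => (1:ℤ))} : Set (ℕ → ℤ)) :=
        Set.mem_insert _ _
      have m2 : tmSeq ∈ ({H, tmSeq, (fun n => -tmSeq n), (fun _ => (1:ℤ))} : Set (ℕ → ℤ)) :=
        Set.mem_insert_iff.mpr (Or.inr (Set.mem_insert _ _))
      have m3 : (fun n => -tmSeq n) ∈
          ({H, tmSeq, (fun n => -tmSeq n), (fun _ => (1:ℤ))} : Set (ℕ → ℤ)) :=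
        Set.mem_insert_iff.mpr (Or.inr (Set.mem_insert_iff.mpr (Or.inr (Set.mem_insert _ _))))
      have m4 : (fun _ => (1:ℤ)) ∈
          ({H, tmSeq, (fun n => -tmSeq n), (fun _ => (1:ℤ))} : Set (ℕ → ℤ)) :=
        Set.mem_insert_iff.mpr (Or.inr (Set.mem_insert_iff.mpr (Or.inr
          (Set.mem_insert_iff.mpr (Or.inr (Set.mem_singleton _))))))
      intro g hg
      simp only [Set.mem_insert_iff, Set.mem_singleton_iff] at hg
      rcases hg with rfl | rfl | rfl | rfl
      · constructor
        · rw [show (fun n => g (2*n)) = (fun _ => (1:ℤ)) from funext hHe]; exact m4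
        · rw [show (fun n => g (2*n+1)) = tmSeq from funext hHo]; exact m2
      · constructor
        · rw [show (fun n => tmSeq (2*n)) = tmSeq from funext tm_even]; exact m2
        · rw [show (fun n => tmSeq (2*n+1)) = (fun n => -tmSeq n) from funext tm_odd]; exact m3
      · constructor
        · rw [show (fun n => -tmSeq (2*n)) = (fun n => -tmSeq n) from
            funext (fun n => congrArg Neg.neg (tm_even n))]; exact m3
        · rw [show (fun n => -tmSeq (2*n+1)) = tmSeq from
            funext (fun n => by rw [tm_odd, neg_neg])]; exact m2
      · exact ⟨m4, m4⟩
  · -- period-doubling part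
    have hform : ∀ m, H' m = ∏ k ∈ Finset.range m, ((-1:ℤ)^k * Gpd k) := by
      intro m
      rw [hH' m, hankel_det_formula pdSeq Ppd Qpd Dx rfl rfl rfl rfl
        (fun n => rfl) (fun n => rfl) hD m]
      exact Finset.prod_congr rfl (fun k _ => factor_pd k)
    have hHe : ∀ n, H' (2*n) = (-1:ℤ)^n := fun n => by rw [hform]; exact (PhiP_closed n).1
    have hHo : ∀ n, H' (2*n+1) = Gpd n := fun n => by rw [hform]; exact (PhiP_closed n).2
    have e0 : ∀ n, ((-1:ℤ))^(2*n) = 1 := fun n => Even.neg_one_pow ⟨n, by ring⟩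
    have e1 : ∀ n, ((-1:ℤ))^(2*n+1) = -1 := fun n => Odd.neg_one_pow ⟨n, by ring⟩
    set F : Set (ℕ → ℤ) :=
      {H', Gpd, (fun n => (-1:ℤ)^n), (fun n => (-1:ℤ)^n * Gpd n),
       (fun n => -((-1:ℤ)^n * Gpd n)), (fun _ => (1:ℤ)), (fun _ => (-1:ℤ))} with hF
    have m1 : H' ∈ F := Set.mem_insert _ _
    have m2 : Gpd ∈ F := Set.mem_insert_iff.mpr (Or.inr (Set.mem_insert _ _))
    have m3 : (fun n => (-1:ℤ)^n) ∈ F :=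
      Set.mem_insert_iff.mpr (Or.inr (Set.mem_insert_iff.mpr (Or.inr (Set.mem_insert _ _))))
    have m4 : (fun n => (-1:ℤ)^n * Gpd n) ∈ F :=
      Set.mem_insert_iff.mpr (Or.inr (Set.mem_insert_iff.mpr (Or.inr
        (Set.mem_insert_iff.mpr (Or.inr (Set.mem_insert _ _))))))
    have m5 : (fun n => -((-1:ℤ)^n * Gpd n)) ∈ F :=
      Set.mem_insert_iff.mpr (Or.inr (Set.mem_insert_iff.mpr (Or.inr
        (Set.mem_insert_iff.mpr (Or.inr (Set.mem_insert_iff.mpr (Or.inr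
          (Set.mem_insert _ _))))))))
    have m6 : (fun _ => (1:ℤ)) ∈ F :=
      Set.mem_insert_iff.mpr (Or.inr (Set.mem_insert_iff.mpr (Or.inr
        (Set.mem_insert_iff.mpr (Or.inr (Set.mem_insert_iff.mpr (Or.inr
          (Set.mem_insert_iff.mpr (Or.inr (Set.mem_insert _ _))))))))))
    have m7 : (fun _ => (-1:ℤ)) ∈ F :=
      Set.mem_insert_iff.mpr (Or.inr (Set.mem_insert_iff.mpr (Or.inr
        (Set.mem_insert_iff.mpr (Or.inr (Set.mem_insert_iff.mpr (Or.inr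
          (Set.mem_insert_iff.mpr (Or.inr (Set.mem_insert_iff.mpr (Or.inr
            (Set.mem_singleton _))))))))))))
    refine kernel_finite_of_closed H' F ?_ m1 ?_
    · exact ((((((Set.finite_singleton _).insert _).insert _).insert _).insert _).insert _).insert _
    · intro g hg
      simp only [hF, Set.mem_insert_iff, Set.mem_singleton_iff] at hg
      rcases hg with rfl | rfl | rfl | rfl | rfl | rfl | rfl
      · constructor
        · rw [show (fun n => g (2*n)) = (fun n => (-1:ℤ)^n) from funext hHe]; exact m3
        · rw [show (fun n => g (2*n+1)) = Gpd from funext hHo]; exact m2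
      · constructor
        · rw [show (fun n => Gpd (2*n)) = (fun n => (-1:ℤ)^n * Gpd n) from funext Gpd_even]
          exact m4
        · rw [show (fun n => Gpd (2*n+1)) = (fun n => (-1:ℤ)^n * Gpd n) from funext Gpd_odd]
          exact m4
      · constructor
        · rw [show (fun n => ((-1:ℤ))^(2*n)) = (fun _ => (1:ℤ)) from funext e0]; exact m6
        · rw [show (fun n => ((-1:ℤ))^(2*n+1)) = (fun _ => (-1:ℤ)) from funext e1]; exact m7
      · constructor
        · rw [show (fun n => ((-1:ℤ))^(2*n) * Gpd (2*n)) = (fun n => (-1:ℤ)^n * Gpd n) from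
            funext (fun n => by rw [e0, one_mul, Gpd_even])]
          exact m4
        · rw [show (fun n => ((-1:ℤ))^(2*n+1) * Gpd (2*n+1)) = (fun n => -((-1:ℤ)^n * Gpd n)) from
            funext (fun n => by rw [e1, Gpd_odd]; ring)]
          exact m5
      · constructor
        · rw [show (fun n => -(((-1:ℤ))^(2*n) * Gpd (2*n))) = (fun n => -((-1:ℤ)^n * Gpd n)) from
            funext (fun n => by rw [e0, one_mul, Gpd_even])]
          exact m5
        · rw [show (fun n => -(((-1:ℤ))^(2*n+1) * Gpd (2*n+1))) = (fun n => (-1:ℤ)^n * Gpd n) from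
            funext (fun n => by rw [e1, Gpd_odd]; ring)]
          exact m4
      · exact ⟨m6, m6⟩
      · exact ⟨m7, m7⟩
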